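/- Let M be a Z-graded unitary magma with rank function θ : M → Z (a unitary magma morphism). The map F_θ sending an M-clique p of arity n to the rational function ∏_{(x,y) arc of p} (u_x + ... + u_{y-1})^{θ(p(x,y))} is an operad morphism from CM to Loday's operad RatFct of rational functions. -/

import Mathlib

noncomputable section

/-- The partial composition `p ∘_i q` of the clique operad `C M` over a unitary
magma `M`, on cliques encoded as functions `ℕ → ℕ → M` (the relevant values of a
clique of arity `n` being on the arcs `(x, y)` with `1 ≤ x < y ≤ n + 1`). -/
def cliqComp {M : Type*} [Mul M] [One M] (i m : ℕ) (p q : ℕ → ℕ → M) :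
    ℕ → ℕ → M := fun x y =>
  if y ≤ i then p x y
  else if x ≤ i ∧ i < i + m ∧ i + m ≤ y ∧ ¬(x = i ∧ y = i + m) then p x (y - m + 1)
  else if i + m ≤ x then p (x - m + 1) (y - m + 1)
  else if i ≤ x ∧ x < y ∧ y ≤ i + m ∧ ¬(x = i ∧ y = i + m) then q (x - i + 1) (y - i + 1)
  else if x = i ∧ y = i + m then p i (i + 1) * q 1 (m + 1)
  else 1

/-- The field of rational functions in the commuting variables `u_1, u_2, …`
(realized as the fraction field of the polynomial ring `ℚ[u_0, u_1, …]`),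
underlying Loday's operad `RatFct`. -/
abbrev Fld : Type := FractionRing (MvPolynomial ℕ ℚ)

/-- The rational function `u_x + u_{x+1} + ⋯ + u_{y-1}`. -/
def uSum (x y : ℕ) : Fld :=
  algebraMap (MvPolynomial ℕ ℚ) Fld (∑ t ∈ Finset.Ico x y, MvPolynomial.X t)

/-- The rational function `F_θ(p) = ∏_{(x,y) arc of p} (u_x + ⋯ + u_{y-1})^{θ(p(x,y))}`
associated with a clique `p` of arity `n` labeled by `M` and a rank function `θ : M → ℤ`. -/
def cliqueFct {M : Type*} (θ : M → ℤ) (n : ℕ) (p : ℕ → ℕ → M) : Fld :=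
  ∏ x ∈ Finset.Icc 1 n, ∏ y ∈ Finset.Icc (x + 1) (n + 1), uSum x y ^ θ (p x y)

open Classical in
/-- The substitution homomorphism on rational functions induced by an assignment
`f` of the variables (well-defined whenever the induced map on polynomials is
injective, which is the case for the substitutions appearing in the partial
compositions of `RatFct`). -/
def substF (f : ℕ → MvPolynomial ℕ ℚ) : Fld →+* Fld :=
  if h : Function.Injective ((algebraMap (MvPolynomial ℕ ℚ) Fld).comp
      (MvPolynomial.aeval f : MvPolynomial ℕ ℚ →ₐ[ℚ] MvPolynomial ℕ ℚ).toRingHom) then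
    IsFractionRing.lift h
  else RingHom.id Fld

/-- The substitution `u_i ↦ u_i + ⋯ + u_{i+m-1}`, `u_j ↦ u_j` for `j < i`, and
`u_j ↦ u_{j+m-1}` for `j > i`, applied to the first factor in the partial
composition `f ∘_i g` of Loday's operad `RatFct`. -/
def lodaySubst (i m : ℕ) : ℕ → MvPolynomial ℕ ℚ := fun j =>
  if j < i then MvPolynomial.X j
  else if j = i then ∑ t ∈ Finset.Ico i (i + m), MvPolynomial.X t
  else MvPolynomial.X (j + m - 1)

/-- The substitution `u_j ↦ u_{i+j-1}` applied to the second factor in the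
partial composition `f ∘_i g` of Loday's operad `RatFct`. -/
def shiftSubst (i : ℕ) : ℕ → MvPolynomial ℕ ℚ := fun j => MvPolynomial.X (i + j - 1)


open MvPolynomial Finset

local notation "R" => MvPolynomial ℕ ℚ

lemma emb_inj : Function.Injective (algebraMap R Fld) := IsFractionRing.injective R Fld

lemma substF_algebraMap {f : ℕ → R}
    (h : Function.Injective (aeval f : R →ₐ[ℚ] R)) (x : R) :
    substF f (algebraMap R Fld x) = algebraMap R Fld (aeval f x) := by
  have h' : Function.Injective ((algebraMap R Fld).comp
      (aeval f : R →ₐ[ℚ] R).toRingHom) := by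
    intro a b hab
    exact h (emb_inj hab)
  rw [substF, dif_pos h']
  exact IsFractionRing.lift_algebraMap h' x

lemma aeval_leftInv {f g : ℕ → R} (h : ∀ j, aeval g (f j) = X j) :
    Function.Injective (aeval f : R →ₐ[ℚ] R) := by
  have key : ∀ x : R, aeval g (aeval f x) = x := by
    have : (aeval g).comp (aeval f) = AlgHom.id ℚ R := by
      apply MvPolynomial.algHom_ext
      intro j
      show aeval g (aeval f (X j)) = X j
      rw [aeval_X]
      exact h j
    intro x
    simpa using DFunLike.congr_fun this x
  exact Function.LeftInverse.injective key

lemma shift_inj (i : ℕ) (hi : 1 ≤ i) :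
    Function.Injective (aeval (shiftSubst i) : R →ₐ[ℚ] R) := by
  have : (aeval (shiftSubst i) : R →ₐ[ℚ] R) = rename (fun j => j + (i - 1)) := by
    apply MvPolynomial.algHom_ext
    intro j
    simp only [aeval_X, rename_X, shiftSubst]
    congr 1
    omega
  rw [this]
  exact rename_injective _ (fun a b hab => by omega)

lemma loday_inj (i m : ℕ) (hi : 1 ≤ i) (hm : 1 ≤ m) :
    Function.Injective (aeval (lodaySubst i m) : R →ₐ[ℚ] R) := by
  apply aeval_leftInv (g := fun t => if t < i then X t else if t = i then X i
    else if t < i + m then 0 else X (t - m + 1))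
  intro j
  simp only [lodaySubst]
  split_ifs with h1 h2
  · simp [h1]
  · subst h2
    rw [map_sum]
    rw [Finset.sum_eq_single_of_mem j (by simp; omega)]
    · simp
    · intro t ht htj
      simp only [aeval_X]
      rw [if_neg (by simp at ht; omega), if_neg htj, if_pos (by simp at ht; omega)]
  · simp only [aeval_X]
    rw [if_neg (by omega), if_neg (by omega), if_neg (by omega)]
    congr 1
    omega

lemma psum_ne_zero {x y : ℕ} (h : x < y) : (∑ t ∈ Ico x y, X t : R) ≠ 0 := by
  intro h0
  have h1 := congrArg (aeval (fun _ => (1 : ℚ))) h0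
  simp only [map_sum, aeval_X, Finset.sum_const, Nat.card_Ico, nsmul_eq_mul, mul_one,
    map_zero] at h1
  have : (y - x : ℕ) = 0 := by exact_mod_cast h1
  omega

lemma uSum_ne_zero {x y : ℕ} (h : x < y) : uSum x y ≠ 0 := by
  intro h0
  exact psum_ne_zero h (emb_inj (by simpa [uSum] using h0))

lemma sum_X_shift (a b c : ℕ) :
    (∑ t ∈ Ico a b, (X (t + c) : R)) = ∑ t ∈ Ico (a + c) (b + c), X t :=
  Finset.sum_Ico_add' (fun t => (X t : R)) a b c

lemma substF_shift_uSum (i x y : ℕ) (hi : 1 ≤ i) :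
    substF (shiftSubst i) (uSum x y) = uSum (i + x - 1) (i + y - 1) := by
  rw [uSum, substF_algebraMap (shift_inj i hi), map_sum]
  unfold uSum
  congr 1
  simp only [aeval_X, shiftSubst]
  rw [Finset.sum_congr rfl (fun t _ => by rw [show i + t - 1 = t + (i-1) by omega]),
    sum_X_shift, show x + (i-1) = i + x - 1 by omega, show y + (i-1) = i + y - 1 by omega]

lemma substF_loday_uSum (i m x y : ℕ) (hi : 1 ≤ i) (hm : 1 ≤ m) (hx : 1 ≤ x)
    (hxy : x < y) :
    substF (lodaySubst i m) (uSum x y) =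
      if y ≤ i then uSum x y
      else if x ≤ i then uSum x (y + m - 1)
      else uSum (x + m - 1) (y + m - 1) := by
  rw [uSum, substF_algebraMap (loday_inj i m hi hm), map_sum]
  simp only [aeval_X]
  split_ifs with h1 h2
  · -- y ≤ i : every t < i
    congr 1
    refine Finset.sum_congr rfl fun t ht => ?_
    simp only [mem_Ico] at ht
    rw [lodaySubst, if_pos (by omega)]
  · -- x ≤ i < y
    have hiy : i < y := by omega
    rw [← Finset.sum_Ico_consecutive _ (show x ≤ i by omega) (show i ≤ y by omega),
      (Finset.insert_Ico_add_one_left_eq_Ico hiy).symm]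
    rw [Finset.sum_insert (by simp)]
    have e1 : (∑ t ∈ Ico x i, lodaySubst i m t) = ∑ t ∈ Ico x i, (X t : R) :=
      Finset.sum_congr rfl fun t ht => by
        simp only [mem_Ico] at ht; rw [lodaySubst, if_pos (by omega)]
    have e2 : lodaySubst i m i = ∑ t ∈ Ico i (i + m), (X t : R) := by
      rw [lodaySubst, if_neg (by omega), if_pos rfl]
    have e3 : (∑ t ∈ Ico (i+1) y, lodaySubst i m t) = ∑ t ∈ Ico (i+m) (y+m-1), (X t : R) := by
      rw [Finset.sum_congr rfl (fun t ht => by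
        simp only [mem_Ico] at ht
        rw [lodaySubst, if_neg (by omega), if_neg (by omega),
          show t + m - 1 = t + (m-1) by omega]), sum_X_shift,
        show (i+1) + (m-1) = i + m by omega, show y + (m-1) = y + m - 1 by omega]
    rw [e1, e2, e3, ← add_assoc,
      Finset.sum_Ico_consecutive _ (show x ≤ i by omega) (show i ≤ i + m by omega),
      Finset.sum_Ico_consecutive _ (show x ≤ i + m by omega) (show i + m ≤ y + m - 1 by omega)]
    rfl
  · -- i < x
    unfold uSum
    congr 1
    rw [Finset.sum_congr rfl (fun t ht => by
      simp only [mem_Ico] at ht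
      rw [lodaySubst, if_neg (by omega), if_neg (by omega),
        show t + m - 1 = t + (m-1) by omega]), sum_X_shift,
      show x + (m-1) = x + m - 1 by omega, show y + (m-1) = y + m - 1 by omega]

def Fp {M : Type} (θ : M → ℤ) (i m : ℕ) (p : ℕ → ℕ → M) (X Y : ℕ) : Fld :=
  if Y ≤ i then uSum X Y ^ θ (p X Y)
  else if X ≤ i ∧ i + m ≤ Y then uSum X Y ^ θ (p X (Y - m + 1))
  else if i + m ≤ X then uSum X Y ^ θ (p (X - m + 1) (Y - m + 1))
  else 1

def Fq {M : Type} (θ : M → ℤ) (i m : ℕ) (q : ℕ → ℕ → M) (X Y : ℕ) : Fld :=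
  if i ≤ X ∧ Y ≤ i + m then uSum X Y ^ θ (q (X - i + 1) (Y - i + 1))
  else 1

lemma key {M : Type} [MulOneClass M] (θ : M → ℤ)
    (hθ1 : θ 1 = 0) (hθmul : ∀ a b : M, θ (a * b) = θ a + θ b)
    (m i : ℕ) (hm : 1 ≤ m) (p q : ℕ → ℕ → M) (X Y : ℕ) (hXY : X < Y) :
    uSum X Y ^ θ (cliqComp i m p q X Y) = Fp θ i m p X Y * Fq θ i m q X Y := by
  by_cases hb : X = i ∧ Y = i + m
  · obtain ⟨hb1, hb2⟩ := hb
    simp only [cliqComp, Fp, Fq]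
    split_ifs <;> try (exfalso; omega)
    rw [hb1, hb2, show i + m - m + 1 = i + 1 by omega, show i - i + 1 = 1 by omega,
        show i + m - i + 1 = m + 1 by omega, hθmul,
        zpow_add₀ (uSum_ne_zero (by omega))]
  · simp only [cliqComp, Fp, Fq]
    split_ifs <;> try (exfalso; omega)
    all_goals try rw [hθ1, zpow_zero]
    all_goals
      first
        | rw [mul_one]
        | rw [one_mul]
        | rfl

lemma qside {M : Type} (θ : M → ℤ) (n m i : ℕ) (hn : 1 ≤ n) (hm : 1 ≤ m)
    (hi1 : 1 ≤ i) (hi2 : i ≤ n) (q : ℕ → ℕ → M) :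
    substF (shiftSubst i) (cliqueFct θ m q) =
      ∏ z ∈ (Icc 1 (n+m-1)).sigma (fun X => Icc (X+1) (n+m)), Fq θ i m q z.1 z.2 := by
  rw [cliqueFct, map_prod]
  simp only [map_prod, map_zpow₀]
  rw [Finset.prod_sigma' (Icc 1 m) (fun x => Icc (x+1) (m+1))
    (fun x y => substF (shiftSubst i) (uSum x y) ^ θ (q x y))]
  refine Finset.prod_of_injOn (fun z => ⟨i + z.1 - 1, i + z.2 - 1⟩) ?_ ?_ ?_ ?_
  · rintro ⟨x1, y1⟩ h1 ⟨x2, y2⟩ h2 heq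
    simp only [Finset.coe_sigma, Set.mem_sigma_iff, Finset.mem_coe, mem_Icc] at h1 h2
    simp only [Sigma.mk.inj_iff, heq_eq_eq] at heq ⊢
    omega
  · rintro ⟨x, y⟩ hz
    simp only [Finset.coe_sigma, Set.mem_sigma_iff, Finset.mem_coe, mem_Icc] at hz ⊢
    try dsimp only at hz ⊢
    omega
  · rintro ⟨X, Y⟩ hz himg
    simp only [Finset.mem_sigma, mem_Icc] at hz
    try dsimp only
    rw [Fq, if_neg]
    intro hc
    refine himg ⟨⟨X - i + 1, Y - i + 1⟩, ?_, ?_⟩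
    · simp only [Finset.coe_sigma, Set.mem_sigma_iff, Finset.mem_coe, mem_Icc]
      omega
    · dsimp only
      simp only [Sigma.mk.inj_iff, heq_eq_eq]
      omega
  · rintro ⟨x, y⟩ hz
    simp only [Finset.mem_sigma, mem_Icc] at hz
    try dsimp only
    rw [substF_shift_uSum i x y hi1]
    simp only [Fq]
    rw [if_pos (by omega), show i + x - 1 - i + 1 = x by omega,
      show i + y - 1 - i + 1 = y by omega]

lemma pside {M : Type} (θ : M → ℤ) (n m i : ℕ) (hn : 1 ≤ n) (hm : 1 ≤ m)
    (hi1 : 1 ≤ i) (hi2 : i ≤ n) (p : ℕ → ℕ → M) :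
    substF (lodaySubst i m) (cliqueFct θ n p) =
      ∏ z ∈ (Icc 1 (n+m-1)).sigma (fun X => Icc (X+1) (n+m)), Fp θ i m p z.1 z.2 := by
  rw [cliqueFct, map_prod]
  simp only [map_prod, map_zpow₀]
  rw [Finset.prod_sigma' (Icc 1 n) (fun x => Icc (x+1) (n+1))
    (fun x y => substF (lodaySubst i m) (uSum x y) ^ θ (p x y))]
  refine Finset.prod_of_injOn
    (fun z => ⟨if z.2 ≤ i then z.1 else if z.1 ≤ i then z.1 else z.1 + m - 1,
               if z.2 ≤ i then z.2 else z.2 + m - 1⟩) ?_ ?_ ?_ ?_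
  · rintro ⟨x1, y1⟩ h1 ⟨x2, y2⟩ h2 heq
    simp only [Finset.coe_sigma, Set.mem_sigma_iff, Finset.mem_coe, mem_Icc] at h1 h2
    simp only [Sigma.mk.inj_iff, heq_eq_eq] at heq ⊢
    obtain ⟨ha, hc⟩ := heq
    split_ifs at ha hc <;> omega
  · rintro ⟨x, y⟩ hz
    simp only [Finset.coe_sigma, Set.mem_sigma_iff, Finset.mem_coe, mem_Icc] at hz ⊢
    try dsimp only at hz ⊢
    split_ifs <;> omega
  · rintro ⟨X, Y⟩ hz himg
    simp only [Finset.mem_sigma, mem_Icc] at hz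
    try dsimp only
    rw [Fp]
    split_ifs with h1 h2 h3
    · exact absurd ⟨⟨X, Y⟩,
        by simp only [Finset.coe_sigma, Set.mem_sigma_iff, Finset.mem_coe, mem_Icc]; omega,
        by dsimp only; simp only [Sigma.mk.inj_iff, heq_eq_eq]; constructor <;> { split_ifs <;> omega }⟩ himg
    · exact absurd ⟨⟨X, Y - m + 1⟩,
        by simp only [Finset.coe_sigma, Set.mem_sigma_iff, Finset.mem_coe, mem_Icc]; omega,
        by dsimp only; simp only [Sigma.mk.inj_iff, heq_eq_eq]; constructor <;> { split_ifs <;> omega }⟩ himg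
    · exact absurd ⟨⟨X - m + 1, Y - m + 1⟩,
        by simp only [Finset.coe_sigma, Set.mem_sigma_iff, Finset.mem_coe, mem_Icc]; omega,
        by dsimp only; simp only [Sigma.mk.inj_iff, heq_eq_eq]; constructor <;> { split_ifs <;> omega }⟩ himg
    all_goals rfl
  · rintro ⟨x, y⟩ hz
    simp only [Finset.mem_sigma, mem_Icc] at hz
    try dsimp only
    rw [substF_loday_uSum i m x y hi1 hm (by omega) (by omega)]
    simp only [Fp]
    by_cases h1 : y ≤ i
    · rw [if_pos h1]
      all_goals simp only [if_pos h1]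
      all_goals rw [if_pos h1]
    · by_cases h2 : x ≤ i
      · rw [if_neg h1, if_pos h2]
        simp only [if_neg h1, if_pos h2]
        rw [if_neg (by omega), if_pos (by constructor <;> omega),
          show y + m - 1 - m + 1 = y by omega]
      · rw [if_neg h1, if_neg h2]
        simp only [if_neg h1, if_neg h2]
        rw [if_neg (by omega), if_neg (by omega), if_pos (by omega),
          show x + m - 1 - m + 1 = x by omega, show y + m - 1 - m + 1 = y by omega]

/-- Let `M` be a `ℤ`-graded unitary magma with rank function `θ : M → ℤ` (a
unitary magma morphism to the additive integers).  Then `F_θ` is an operad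
morphism from the clique operad `C M` to Loday's operad `RatFct`: it sends the
unit clique to `1` and satisfies
`F_θ(p ∘_i q) = F_θ(p)(u_1,…,u_{i-1}, u_i+⋯+u_{i+m-1}, u_{i+m},…) · F_θ(q)(u_i,…,u_{i+m-1})`. -/
theorem cliqueFct_operad_morphism (M : Type) [MulOneClass M] (θ : M → ℤ)
    (hθ1 : θ 1 = 0) (hθmul : ∀ a b : M, θ (a * b) = θ a + θ b)
    (n m i : ℕ) (hn : 1 ≤ n) (hm : 1 ≤ m) (hi1 : 1 ≤ i) (hi2 : i ≤ n)
    (p q : ℕ → ℕ → M) :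
    cliqueFct θ 1 (fun _ _ => (1 : M)) = 1 ∧
    cliqueFct θ (n + m - 1) (cliqComp i m p q) =
      substF (lodaySubst i m) (cliqueFct θ n p) *
        substF (shiftSubst i) (cliqueFct θ m q) := by
  constructor
  · simp [cliqueFct, hθ1]
  · have hrange : n + m - 1 + 1 = n + m := by omega
    rw [cliqueFct]
    simp only [hrange]
    rw [Finset.prod_sigma' (Icc 1 (n+m-1)) (fun x => Icc (x+1) (n+m))
        (fun x y => uSum x y ^ θ (cliqComp i m p q x y)),
      pside θ n m i hn hm hi1 hi2 p, qside θ n m i hn hm hi1 hi2 q,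
      ← Finset.prod_mul_distrib]
    refine Finset.prod_congr rfl ?_
    rintro ⟨X, Y⟩ hz
    simp only [Finset.mem_sigma, mem_Icc] at hz
    exact key θ hθ1 hθmul m i hm p q X Y (by omega)

end
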